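/- Let m ≥ 3 and suppose the tuple x = (x_1, …, x_m) of real numbers satisfies conditions (1) and (2). Then x_i > 0 for every i with 1 ≤ i ≤ m. -/
import Mathlib


/-- The matrix `A = [[0, 1], [-1, t]]` associated to an edge with cross ratio `t`. -/
noncomputable def crossA (t : ℝ) : Matrix (Fin 2) (Fin 2) ℝ := !![0, 1; -1, t]

/-- The partial product `W_j = A_1 A_2 ⋯ A_j` of the matrices associated to the
cross ratios `x_1, …, x_m` (1-indexed: `crossW m x j` is `W_j`). -/
noncomputable def crossW (m : ℕ) (x : Fin m → ℝ) (j : ℕ) : Matrix (Fin 2) (Fin 2) ℝ :=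
  ((List.ofFn fun i : Fin m => crossA (x i)).take j).prod

/-- Condition (1): `W_m = -I`. -/
def Cond1 (m : ℕ) (x : Fin m → ℝ) : Prop := crossW m x m = -1

/-- Condition (2) (strict sign condition): `a_1 = 0`, `d_{m-1} = 0`,
`a_j < 0` for `2 ≤ j ≤ m-1`, `d_j > 0` for `1 ≤ j ≤ m-2`, and
`b_j > 0`, `c_j < 0` for `1 ≤ j ≤ m-1`. -/
def Cond2 (m : ℕ) (x : Fin m → ℝ) : Prop :=
  crossW m x 1 0 0 = 0 ∧ crossW m x (m - 1) 1 1 = 0 ∧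
  (∀ j, 2 ≤ j → j ≤ m - 1 → crossW m x j 0 0 < 0) ∧
  (∀ j, 1 ≤ j → j ≤ m - 2 → 0 < crossW m x j 1 1) ∧
  (∀ j, 1 ≤ j → j ≤ m - 1 → 0 < crossW m x j 0 1 ∧ crossW m x j 1 0 < 0)

/-- Condition (3) (weak sign condition): as in (2) but with non-strict inequalities. -/
def Cond3 (m : ℕ) (x : Fin m → ℝ) : Prop :=
  crossW m x 1 0 0 = 0 ∧ crossW m x (m - 1) 1 1 = 0 ∧
  (∀ j, 2 ≤ j → j ≤ m - 1 → crossW m x j 0 0 ≤ 0) ∧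
  (∀ j, 1 ≤ j → j ≤ m - 2 → 0 ≤ crossW m x j 1 1) ∧
  (∀ j, 1 ≤ j → j ≤ m - 1 → 0 ≤ crossW m x j 0 1 ∧ crossW m x j 1 0 ≤ 0)


lemma crossW_succ (m : ℕ) (x : Fin m → ℝ) (j : ℕ) (hj : j < m) :
    crossW m x (j+1) = crossW m x j * crossA (x ⟨j, hj⟩) := by
  unfold crossW
  rw [List.prod_take_succ _ j (by simpa using hj)]
  congr 1
  simp [List.get_ofFn]

lemma crossW_succ_01 (m : ℕ) (x : Fin m → ℝ) (j : ℕ) (hj : j < m) :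
    crossW m x (j+1) 0 1 = crossW m x j 0 0 + crossW m x j 0 1 * x ⟨j, hj⟩ := by
  rw [crossW_succ m x j hj]
  simp [crossA, Matrix.mul_apply, Fin.sum_univ_two]

/-- Cross ratios are positive: if `m ≥ 3` and the tuple `x` satisfies conditions (1)
and (2), then every `x_i` is positive. -/
theorem cross_ratios_pos (m : ℕ) (hm : 3 ≤ m) (x : Fin m → ℝ)
    (h1 : Cond1 m x) (h2 : Cond2 m x) :
    ∀ i : Fin m, 0 < x i := by
  obtain ⟨ha1, -, ha, hd, hbc⟩ := h2
  have hW1 : crossW m x 1 = crossA (x ⟨0, by omega⟩) := by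
    rw [show (1:ℕ) = 0+1 from rfl, crossW_succ m x 0 (by omega)]
    simp [crossW]
  intro i
  rcases eq_or_ne i.val 0 with h0 | h0
  · have hd1 := hd 1 le_rfl (by omega)
    rw [hW1] at hd1
    simp [crossA] at hd1
    have : i = ⟨0, by omega⟩ := Fin.ext h0
    rw [this]; exact hd1
  · set j := i.val with hjdef
    have hjm : j < m := i.isLt
    have hfi : (⟨j, hjm⟩ : Fin m) = i := Fin.ext rfl
    have haj : crossW m x j 0 0 ≤ 0 := by
      rcases eq_or_ne j 1 with h | h
      · rw [h, ha1]
      · exact (ha j (by omega) (by omega)).le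
    have hbj : 0 < crossW m x j 0 1 := (hbc j (by omega) (by omega)).1
    have heq := crossW_succ_01 m x j hjm
    rw [hfi] at heq
    rcases eq_or_ne j (m-1) with hlast | hlast
    · have hWm : crossW m x (j+1) 0 1 = 0 := by
        rw [show j+1 = m by omega, h1]; simp
      have haj' : crossW m x j 0 0 < 0 := ha j (by omega) (by omega)
      nlinarith [heq, hWm]
    · have hb' : 0 < crossW m x (j+1) 0 1 := (hbc (j+1) (by omega) (by omega)).1
      nlinarith [heq]
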